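/- Let X be an uncountable compact metric space, n ≥ 1, and t ≥ 0 a real number with t < n. Suppose the set D of functions g in C(X, ℝⁿ) with upper box dimension of g(X) at most t is dense. Then the set of functions f in C(X, ℝⁿ) whose image f(X) has lower box dimension at most t is residual (comeagre) in C(X, ℝⁿ). -/

import Mathlib

open Set Metric Filter MeasureTheory TopologicalSpace

noncomputable def coveringNumber {X : Type*} [MetricSpace X] (δ : ℝ) (F : Set X) : ℕ∞ :=
  sInf {m : ℕ∞ | ∃ C : Finset (Set X), (C.card : ℕ∞) = m ∧
    (∀ U ∈ C, IsOpen U ∧ Metric.diam U ≤ δ) ∧ F ⊆ ⋃ U ∈ C, U}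

noncomputable def packingNumber {X : Type*} [MetricSpace X] (δ : ℝ) (F : Set X) : ℕ∞ :=
  sSup {m : ℕ∞ | ∃ S : Finset X, (S.card : ℕ∞) = m ∧ (↑S : Set X) ⊆ F ∧
    (S : Set X).Pairwise fun x y => Disjoint (Metric.closedBall x δ) (Metric.closedBall y δ)}

noncomputable def upperBoxDim {X : Type*} [MetricSpace X] (F : Set X) : ℝ :=
  Filter.limsup (fun δ : ℝ => Real.log ((coveringNumber δ F).toNat) / (-Real.log δ))
    (nhdsWithin 0 (Set.Ioi 0))

noncomputable def lowerBoxDim {X : Type*} [MetricSpace X] (F : Set X) : ℝ :=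
  Filter.liminf (fun δ : ℝ => Real.log ((coveringNumber δ F).toNat) / (-Real.log δ))
    (nhdsWithin 0 (Set.Ioi 0))

noncomputable def packingDim {X : Type*} [MetricSpace X] (F : Set X) : ℝ :=
  sInf {s : ℝ | ∃ E : ℕ → Set X, F ⊆ ⋃ i, E i ∧ ∀ i, upperBoxDim (E i) ≤ s}

noncomputable def covDim (Y : Type*) [TopologicalSpace Y] : ℕ∞ :=
  sInf {m : ℕ∞ | ∀ (ι : Type) (U : ι → Set Y), (∀ i, IsOpen (U i)) → (⋃ i, U i) = Set.univ →
    ∃ (κ : Type) (V : κ → Set Y), (∀ j, IsOpen (V j)) ∧ (⋃ j, V j) = Set.univ ∧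
      (∀ j, ∃ i, V j ⊆ U i) ∧ ∀ y : Y, ENat.card {j : κ // y ∈ V j} ≤ m + 1}

lemma covering_le_of_finset {X : Type*} [MetricSpace X] {δ : ℝ} {F : Set X}
    (C : Finset (Set X)) (h1 : ∀ U ∈ C, IsOpen U ∧ Metric.diam U ≤ δ)
    (h2 : F ⊆ ⋃ U ∈ C, U) : coveringNumber δ F ≤ C.card :=
  sInf_le ⟨C, rfl, h1, h2⟩

lemma exists_finset_of_covering_le {X : Type*} [MetricSpace X] {δ : ℝ} {F : Set X} {m : ℕ}
    (h : coveringNumber δ F ≤ (m : ℕ∞)) :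
    ∃ C : Finset (Set X), C.card ≤ m ∧ (∀ U ∈ C, IsOpen U ∧ Metric.diam U ≤ δ) ∧
      F ⊆ ⋃ U ∈ C, U := by
  by_contra hcon
  push_neg at hcon
  have h1 : (m + 1 : ℕ∞) ≤ coveringNumber δ F := by
    apply le_sInf
    rintro m' ⟨C, rfl, hp, hc⟩
    rcases le_or_gt C.card m with hle | hgt
    · exact absurd hc (hcon C hle hp)
    · exact_mod_cast Nat.succ_le_of_lt hgt
  have h2 : (m + 1 : ℕ∞) ≤ m := h1.trans h
  norm_cast at h2; omega

lemma coveringNumber_le_grid {n : ℕ} {K : Set (Fin n → ℝ)} {R δ : ℝ}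
    (hδ : 0 < δ) (hK : K ⊆ Metric.closedBall 0 R) :
    coveringNumber δ K ≤ ((2 * (⌈2 * R / δ⌉₊ + 1) + 1) ^ n : ℕ) := by
  classical
  set ε : ℝ := δ / 2 with hε
  have hε0 : 0 < ε := by positivity
  set M : ℕ := ⌈2 * R / δ⌉₊ + 1 with hM
  set C : Finset (Set (Fin n → ℝ)) :=
    (Fintype.piFinset fun _ : Fin n => Finset.Icc (-(M : ℤ)) (M : ℤ)).image
      (fun v => Metric.ball (fun i => (v i : ℝ) * ε) ε) with hC
  have hprop : ∀ U ∈ C, IsOpen U ∧ Metric.diam U ≤ δ := by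
    intro U hU
    simp only [hC, Finset.mem_image] at hU
    obtain ⟨v, _, rfl⟩ := hU
    exact ⟨isOpen_ball, (diam_ball hε0.le).trans (by rw [hε]; ring_nf; exact le_refl _)⟩
  have hcov : K ⊆ ⋃ U ∈ C, U := by
    intro x hx
    have hxR : ∀ i, |x i| ≤ R := by
      intro i
      have hx' := mem_closedBall.1 (hK hx)
      calc |x i| = dist (x i) 0 := by simp [Real.dist_eq]
        _ ≤ dist x 0 := dist_le_pi_dist x 0 i
        _ ≤ R := hx'
    set v : Fin n → ℤ := fun i => round (x i / ε) with hv
    have key : ∀ i, |x i / ε - (v i : ℝ)| ≤ 1 / 2 := fun i => abs_sub_round (x i / ε)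
    have hvM : ∀ i, v i ∈ Finset.Icc (-(M : ℤ)) (M : ℤ) := by
      intro i
      have h3 : |x i / ε| ≤ R / ε := by
        rw [abs_div, abs_of_pos hε0]
        exact div_le_div_of_nonneg_right (hxR i) hε0.le |>.trans_eq rfl
      have h4 : R / ε = 2 * R / δ := by rw [hε]; field_simp
      have h5 : (2 * R / δ : ℝ) ≤ ⌈2 * R / δ⌉₊ := Nat.le_ceil _
      have h1 : |(v i : ℝ)| ≤ (M : ℝ) := by
        calc |(v i : ℝ)| = |x i / ε - (x i / ε - (v i : ℝ))| := by ring_nf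
          _ ≤ |x i / ε| + |x i / ε - (v i : ℝ)| := abs_sub _ _
          _ ≤ R / ε + 1 / 2 := add_le_add h3 (key i)
          _ = 2 * R / δ + 1 / 2 := by rw [h4]
          _ ≤ (⌈2 * R / δ⌉₊ : ℝ) + 1 := by linarith
          _ = (M : ℝ) := by rw [hM]; push_cast; ring
      have h1' : |v i| ≤ (M : ℤ) := by exact_mod_cast (by exact_mod_cast h1 : |(v i : ℝ)| ≤ ((M : ℤ) : ℝ))
      rw [Finset.mem_Icc]
      exact ⟨neg_le_of_abs_le h1', le_of_abs_le h1'⟩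
    have hmem : x ∈ Metric.ball (fun i => (v i : ℝ) * ε) ε := by
      rw [mem_ball, dist_pi_lt_iff hε0]
      intro i
      rw [Real.dist_eq]
      have heq : x i - (v i : ℝ) * ε = (x i / ε - (v i : ℝ)) * ε := by field_simp
      rw [heq, abs_mul, abs_of_pos hε0]
      calc |x i / ε - (v i : ℝ)| * ε ≤ (1/2) * ε := mul_le_mul_of_nonneg_right (key i) hε0.le
        _ < ε := by linarith
    exact mem_biUnion (Finset.mem_image_of_mem _ (Fintype.mem_piFinset.2 hvM)) hmem
  refine (covering_le_of_finset C hprop hcov).trans ?_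
  have hcard : C.card ≤ (2 * M + 1) ^ n := by
    rw [hC]
    refine Finset.card_image_le.trans ?_
    rw [Fintype.card_piFinset]
    apply le_of_eq
    rw [Finset.prod_const]
    congr 1
    · rw [Int.card_Icc]; omega
    · simp
  exact_mod_cast hcard

lemma ratio_bounded {n : ℕ} {K : Set (Fin n → ℝ)} (hK : IsCompact K) :
    ∃ A : ℝ, ∀ᶠ δ in nhdsWithin (0:ℝ) (Set.Ioi 0),
      Real.log ((coveringNumber δ K).toNat) / (-Real.log δ) ≤ A := by
  obtain ⟨R₀, hR₀⟩ := hK.isBounded.subset_closedBall 0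
  set R : ℝ := max R₀ 1 with hR
  have hR1 : (1:ℝ) ≤ R := le_max_right _ _
  have hKR : K ⊆ Metric.closedBall 0 R :=
    hR₀.trans (Metric.closedBall_subset_closedBall (le_max_left _ _))
  set c : ℝ := 4 * R + 5 with hc
  have hc9 : (9:ℝ) ≤ c := by rw [hc]; linarith
  have hc0 : 0 < c := by linarith
  have hlogc : 0 ≤ Real.log c := Real.log_nonneg (by linarith)
  refine ⟨n * (Real.log c + 1), ?_⟩
  filter_upwards [Ioo_mem_nhdsGT_of_mem (Set.mem_Ico.2 ⟨le_refl 0, Real.exp_pos (-1)⟩)]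
    with δ hδ
  obtain ⟨hδ0, hδe⟩ := hδ
  have hδ1 : δ < 1 := hδe.trans_le (by
    rw [show (1:ℝ) = Real.exp 0 by simp]
    exact (Real.exp_le_exp.2 (by norm_num)))
  -- L := -log δ ≥ 1
  have hL1 : 1 ≤ -Real.log δ := by
    have : Real.log δ < Real.log (Real.exp (-1)) := Real.log_lt_log hδ0 hδe
    rw [Real.log_exp] at this
    linarith
  have hL0 : 0 < -Real.log δ := by linarith
  set N : ℕ := (2 * (⌈2 * R / δ⌉₊ + 1) + 1) ^ n with hN
  have hcov : (coveringNumber δ K).toNat ≤ N := by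
    have h := ENat.toNat_le_toNat (coveringNumber_le_grid hδ0 hKR)
      (by exact_mod_cast ENat.coe_ne_top N)
    exact h.trans_eq (ENat.toNat_coe N)
  -- base bound
  have hbase : ((2 * (⌈2 * R / δ⌉₊ + 1) + 1 : ℕ) : ℝ) ≤ c / δ := by
    have h1 : (⌈2 * R / δ⌉₊ : ℝ) < 2 * R / δ + 1 :=
      Nat.ceil_lt_add_one (by positivity)
    have h2 : (5:ℝ) ≤ 5 / δ := by
      rw [le_div_iff₀ hδ0]; linarith
    have h3 : 4 * R / δ + 5 ≤ c / δ := by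
      rw [hc, add_div]
      have : (5:ℝ)/δ ≥ 5 := h2
      linarith
    push_cast
    calc (2 * ((⌈2 * R / δ⌉₊ : ℝ) + 1) + 1) ≤ 2 * (2 * R / δ + 2) + 1 := by linarith
      _ = 4 * R / δ + 5 := by ring
      _ ≤ c / δ := h3
  have hbase0 : (0:ℝ) < ((2 * (⌈2 * R / δ⌉₊ + 1) + 1 : ℕ) : ℝ) := by positivity
  have hlogN : Real.log ((coveringNumber δ K).toNat) ≤ n * (Real.log c + (-Real.log δ)) := by
    have hN' : Real.log N ≤ n * (Real.log c + (-Real.log δ)) := by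
      have : Real.log N = n * Real.log ((2 * (⌈2 * R / δ⌉₊ + 1) + 1 : ℕ) : ℝ) := by
        rw [hN]; push_cast [Real.log_pow]; ring
      rw [this]
      have hlb : Real.log ((2 * (⌈2 * R / δ⌉₊ + 1) + 1 : ℕ) : ℝ) ≤ Real.log (c / δ) :=
        Real.log_le_log hbase0 hbase
      rw [Real.log_div hc0.ne' hδ0.ne'] at hlb
      have : (0:ℝ) ≤ n := Nat.cast_nonneg n
      nlinarith
    rcases Nat.eq_zero_or_pos (coveringNumber δ K).toNat with h0 | hpos
    · rw [h0]
      simp only [Nat.cast_zero, Real.log_zero]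
      positivity
    · refine (Real.log_le_log (by exact_mod_cast hpos) (by exact_mod_cast hcov)).trans hN'
  rw [div_le_iff₀ hL0]
  have hn0 : (0:ℝ) ≤ n := Nat.cast_nonneg n
  nlinarith [mul_nonneg hn0 hlogc, mul_nonneg (mul_nonneg hn0 hlogc) (by linarith : (0:ℝ) ≤ -Real.log δ - 1)]

theorem stmt9 {X : Type*} [MetricSpace X] [CompactSpace X]
    (hX : ¬(Set.univ : Set X).Countable) (n : ℕ) (hn : 1 ≤ n)
    (t : ℝ) (ht0 : 0 ≤ t) (htn : t < n)
    (hD : Dense {g : C(X, Fin n → ℝ) | upperBoxDim (Set.range g) ≤ t}) :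
    {f : C(X, Fin n → ℝ) | lowerBoxDim (Set.range f) ≤ t} ∈ residual C(X, Fin n → ℝ) := by
  classical
  set E : ℕ → Set C(X, Fin n → ℝ) := fun k =>
    {f | ∃ (δ : ℝ) (m : ℕ), 0 < δ ∧ δ < 1/((k:ℝ)+1) ∧ δ < 1 ∧
      Real.log m / (-Real.log δ) < t + 1/((k:ℝ)+1) ∧
      ∃ C : Finset (Set (Fin n → ℝ)), C.card ≤ m ∧
        (∀ U ∈ C, IsOpen U ∧ Metric.diam U ≤ δ) ∧ Set.range f ⊆ ⋃ U ∈ C, U} with hE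
  -- each E k is open
  have hopen : ∀ k, IsOpen (E k) := by
    intro k
    rw [Metric.isOpen_iff]
    rintro f ⟨δ, m, hδ0, hδk, hδ1, hlog, C, hCm, hCprop, hCcov⟩
    have hUopen : IsOpen (⋃ U ∈ C, U) :=
      isOpen_biUnion fun U hU => (hCprop U hU).1
    obtain ⟨η, hη0, hηsub⟩ := (isCompact_range f.continuous).exists_thickening_subset_open
      hUopen hCcov
    refine ⟨η, hη0, fun f' hf' => ?_⟩
    refine ⟨δ, m, hδ0, hδk, hδ1, hlog, C, hCm, hCprop, ?_⟩
    rintro _ ⟨x, rfl⟩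
    refine hηsub (Metric.mem_thickening_iff.2 ⟨f x, Set.mem_range_self x, ?_⟩)
    calc dist (f' x) (f x) ≤ dist f' f := ContinuousMap.dist_apply_le_dist x
      _ < η := by rwa [Metric.mem_ball] at hf'
  -- each E k is dense
  have hdense : ∀ k, Dense (E k) := by
    intro k
    refine Dense.mono ?_ hD
    intro g hg
    have hk0 : (0:ℝ) < 1/((k:ℝ)+1) := by positivity
    -- g's ratio is bounded above
    obtain ⟨A, hA⟩ := ratio_bounded (isCompact_range g.continuous)
    have hbdd : IsBoundedUnder (· ≤ ·) (nhdsWithin (0:ℝ) (Set.Ioi 0))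
        (fun δ : ℝ => Real.log ((coveringNumber δ (Set.range g)).toNat) / (-Real.log δ)) :=
      ⟨A, eventually_map.2 hA⟩
    have hlt : upperBoxDim (Set.range g) < t + 1/((k:ℝ)+1) := lt_of_le_of_lt hg (by linarith)
    have hev := eventually_lt_of_limsup_lt hlt hbdd
    have hsmall : Set.Ioo (0:ℝ) (min (1/((k:ℝ)+1)) 1) ∈ nhdsWithin (0:ℝ) (Set.Ioi 0) :=
      Ioo_mem_nhdsGT_of_mem (Set.mem_Ico.2 ⟨le_refl 0, by positivity⟩)
    obtain ⟨δ, hδlt, hδ0, hδm⟩ := (hev.and (eventually_of_mem hsmall (fun x hx => hx))).exists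
    have hδk : δ < 1/((k:ℝ)+1) := lt_of_lt_of_le hδm (min_le_left _ _)
    have hδ1 : δ < 1 := lt_of_lt_of_le hδm (min_le_right _ _)
    -- covering number is finite
    obtain ⟨R, hR⟩ := (isCompact_range g.continuous).isBounded.subset_closedBall 0
    have hne : coveringNumber δ (Set.range g) ≠ ⊤ := by
      intro htop
      have hgr := coveringNumber_le_grid (K := Set.range g) hδ0 hR
      rw [htop, top_le_iff] at hgr
      exact ENat.coe_ne_top _ hgr
    set m : ℕ := (coveringNumber δ (Set.range g)).toNat with hm
    have hle : coveringNumber δ (Set.range g) ≤ (m : ℕ∞) := (ENat.coe_toNat hne).symm.le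
    obtain ⟨C, hCm, hCprop, hCcov⟩ := exists_finset_of_covering_le hle
    exact ⟨δ, m, hδ0, hδk, hδ1, hδlt, C, hCm, hCprop, hCcov⟩
  -- intersection is contained in the target
  have hsub : (⋂ k, E k) ⊆ {f : C(X, Fin n → ℝ) | lowerBoxDim (Set.range f) ≤ t} := by
    intro f hf
    simp only [Set.mem_iInter] at hf
    set u : ℝ → ℝ := fun δ =>
      Real.log ((coveringNumber δ (Set.range f)).toNat) / (-Real.log δ) with hu
    have hlow : IsBoundedUnder (· ≥ ·) (nhdsWithin (0:ℝ) (Set.Ioi 0)) u := by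
      refine ⟨0, eventually_map.2 ?_⟩
      filter_upwards [Ioo_mem_nhdsGT_of_mem (Set.mem_Ico.2 ⟨le_refl (0:ℝ), one_pos⟩)]
        with δ hδ
      have hL : 0 < -Real.log δ := by
        have := Real.log_neg hδ.1 hδ.2
        linarith
      exact div_nonneg (Real.log_natCast_nonneg _) hL.le
    show lowerBoxDim (Set.range f) ≤ t
    rw [lowerBoxDim]
    refine le_of_forall_pos_le_add fun ε hε => ?_
    refine liminf_le_of_frequently_le ?_ hlow
    rw [Filter.frequently_iff]
    intro s hs
    obtain ⟨a, ha, hIoo⟩ := mem_nhdsGT_iff_exists_Ioo_subset.1 hs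
    obtain ⟨k, hk⟩ := exists_nat_one_div_lt (lt_min (Set.mem_Ioi.1 ha) hε)
    obtain ⟨δ, m, hδ0, hδk, hδ1, hlog, C, hCm, hCprop, hCcov⟩ := hf k
    have hka : 1/((k:ℝ)+1) < a := lt_of_lt_of_le hk (min_le_left _ _)
    have hkε : 1/((k:ℝ)+1) < ε := lt_of_lt_of_le hk (min_le_right _ _)
    refine ⟨δ, hIoo ⟨hδ0, hδk.trans hka⟩, ?_⟩
    have hL : 0 < -Real.log δ := by
      have := Real.log_neg hδ0 hδ1
      linarith
    have hcovle : (coveringNumber δ (Set.range f)).toNat ≤ m := by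
      have h1 : coveringNumber δ (Set.range f) ≤ (m : ℕ∞) :=
        (covering_le_of_finset C hCprop hCcov).trans (by exact_mod_cast hCm)
      exact ENat.toNat_le_toNat (by simpa using h1) (ENat.coe_ne_top m) |>.trans_eq (by simp)
    have hloglog : Real.log ((coveringNumber δ (Set.range f)).toNat) ≤ Real.log m := by
      rcases Nat.eq_zero_or_pos ((coveringNumber δ (Set.range f)).toNat) with h0 | hpos
      · rw [h0]; simpa using Real.log_natCast_nonneg m
      · exact Real.log_le_log (by exact_mod_cast hpos) (by exact_mod_cast hcovle)
    show u δ ≤ t + ε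
    refine le_of_lt ?_
    calc u δ ≤ Real.log m / (-Real.log δ) := div_le_div_of_nonneg_right hloglog hL.le
      _ < t + 1/((k:ℝ)+1) := hlog
      _ ≤ t + ε := by linarith
  exact Filter.mem_of_superset
    (countable_iInter_mem.2 fun k => residual_of_dense_open (hopen k) (hdense k)) hsub
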